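/- Let q be a prime power with q ≡ 1 (mod 3) and let ξ ∈ F_q satisfy ξ² + ξ + 1 = 0. Let t₁, t₂, t₃ ∈ F_{q²} with t_i^{q+1} = 1 and t₁ ≠ 1. Then the 4×6 matrix over F_{q²} with rows (1,1,1,1,0,0), (1,t₁³,t₁,t₁²,0,0), (1,t₂³,ξt₂,ξt₂²,t₂,t₂²), (1,t₃³,ξ²t₃,ξ²t₃²,−t₃,−t₃²) has rank 4. -/

import Mathlib

/-- rank-4 condition showing the union of three twisted cubics is a
4-general set of PG(5,q), q ≡ 1 (mod 3). K plays the role of F_{q²}; ξ is a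
primitive cube root of unity (lying in the subfield F_q). -/
theorem stmt15 (q : ℕ) (hq : ∃ p k : ℕ, p.Prime ∧ 0 < k ∧ q = p ^ k)
    (hmod : q % 3 = 1) (K : Type) [Field K] [Fintype K]
    (hcard : Fintype.card K = q ^ 2)
    (ξ : K) (hξ : ξ ^ 2 + ξ + 1 = 0)
    (t₁ t₂ t₃ : K) (h1 : t₁ ^ (q + 1) = 1) (h2 : t₂ ^ (q + 1) = 1)
    (h3 : t₃ ^ (q + 1) = 1) (ht1 : t₁ ≠ 1) :
    Matrix.rank
      !![1, 1, 1, 1, 0, 0;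
         1, t₁ ^ 3, t₁, t₁ ^ 2, 0, 0;
         1, t₂ ^ 3, ξ * t₂, ξ * t₂ ^ 2, t₂, t₂ ^ 2;
         1, t₃ ^ 3, ξ ^ 2 * t₃, ξ ^ 2 * t₃ ^ 2, -t₃, -t₃ ^ 2] = 4 := by
  classical
  obtain ⟨p, k, hp, hk, hqpk⟩ := hq
  -- characteristic facts
  have hcharP : CharP K (ringChar K) := ringChar.charP K
  obtain ⟨n, hrprime, hcardr⟩ := FiniteField.card K (ringChar K)
  have hq2 : q ^ 2 = p ^ (2 * k) := by rw [hqpk, ← pow_mul, mul_comm]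
  have hrdvd : ringChar K ∣ p ^ (2 * k) := by
    rw [← hq2, ← hcard, hcardr]
    exact dvd_pow_self _ (by exact_mod_cast n.pos.ne')
  have hrp : ringChar K = p :=
    (Nat.prime_dvd_prime_iff_eq hrprime hp).mp (hrprime.dvd_of_dvd_pow hrdvd)
  have hchar : CharP K p := hrp ▸ hcharP
  haveI : Fact p.Prime := ⟨hp⟩
  have h3K : (3 : K) ≠ 0 := by
    intro h30
    have hpd : p ∣ 3 := (CharP.cast_eq_zero_iff K p 3).mp h30
    have hp3 : p = 3 := (Nat.prime_dvd_prime_iff_eq hp Nat.prime_three).mp hpd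
    have h3q : 3 ∣ q := by
      rw [hqpk, hp3]; exact dvd_pow_self 3 hk.ne'
    omega
  -- Frobenius is additive
  have frob : ∀ x y : K, (x + y) ^ q = x ^ q + y ^ q := by
    intro x y
    rw [hqpk]
    exact add_pow_char_pow ..
  have h2q : (2 : K) ^ q = 2 := by
    have h := frob 1 1
    norm_num at h
    norm_num [h]
  have hnegq : ∀ x : K, (-x) ^ q = -(x ^ q) := by
    intro x
    have h0 : (x + -x) ^ q = x ^ q + (-x) ^ q := frob x (-x)
    rw [add_neg_cancel, zero_pow (by omega : q ≠ 0)] at h0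
    exact (neg_eq_of_add_eq_zero_right h0.symm).symm
  -- nonvanishing
  have hne0 : ∀ x : K, x ^ (q + 1) = 1 → x ≠ 0 := by
    intro x hx h0
    rw [h0, zero_pow (by omega : q + 1 ≠ 0)] at hx
    exact zero_ne_one hx
  have ht10 : t₁ ≠ 0 := hne0 _ h1
  have ht20 : t₂ ≠ 0 := hne0 _ h2
  have ht30 : t₃ ≠ 0 := hne0 _ h3
  have hu1 : t₁ - 1 ≠ 0 := sub_ne_zero.mpr ht1
  -- key claim: if t ∈ μ_{q+1} satisfies both relations with u = t₁, contradiction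
  have key : ∀ t : K, t ^ (q + 1) = 1 → t ≠ 0 →
      t₁ * (t + 2) = t * (t - 1) → False := by
    intro t ht ht0 E1
    -- Frobenius image of E1
    have hU : t₁ ^ q * t₁ = 1 := by rw [← pow_succ]; exact h1
    have hT : t ^ q * t = 1 := by rw [← pow_succ]; exact ht
    have hq1 : t₁ ^ q * (t ^ q + 2) = t ^ q * (t ^ q - 1) := by
      have h := congrArg (· ^ q) E1
      simp only [mul_pow] at h
      have ha : (t + 2) ^ q = t ^ q + 2 := by rw [frob, h2q]
      have hb : (t - 1) ^ q = t ^ q - 1 := by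
        rw [sub_eq_add_neg, frob, hnegq, one_pow, ← sub_eq_add_neg]
      rw [ha, hb] at h
      exact h
    set U := t₁ ^ q with hUdef
    set T := t ^ q with hTdef
    have E2 : t * (1 + 2 * t) = t₁ * (1 - t) := by
      linear_combination (t₁ * t ^ 2) * hq1 -
        (t * t₁ * U - t₁ * t * T - t₁ + t₁ * t) * hT - (t + 2 * t ^ 2) * hU
    have hsum3 : 3 * (t * (t ^ 2 + t + 1)) = 0 := by
      linear_combination (1 - t) * E1 + (t + 2) * E2
    have hsum : t ^ 2 + t + 1 = 0 := by
      rcases mul_eq_zero.mp hsum3 with h | h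
      · exact absurd h h3K
      · rcases mul_eq_zero.mp h with h' | h'
        · exact absurd h' ht0
        · exact h'
    have ht3 : t ^ 3 = 1 := by linear_combination (t - 1) * hsum
    have hexp : q + 1 = 3 * (q / 3) + 2 := by omega
    have ht2 : t ^ 2 = 1 := by
      have h' : t ^ (q + 1) = (t ^ 3) ^ (q / 3) * t ^ 2 := by
        rw [← pow_mul, ← pow_add, ← hexp]
      rw [ht3, one_pow, one_mul] at h'
      rw [← h', ht]
    have : (3 : K) = 0 := by linear_combination (t - 1) * ht2 - (t - 2) * hsum
    exact h3K this
  -- linear independence of rows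
  set M : Matrix (Fin 4) (Fin 6) K :=
    !![1, 1, 1, 1, 0, 0;
       1, t₁ ^ 3, t₁, t₁ ^ 2, 0, 0;
       1, t₂ ^ 3, ξ * t₂, ξ * t₂ ^ 2, t₂, t₂ ^ 2;
       1, t₃ ^ 3, ξ ^ 2 * t₃, ξ ^ 2 * t₃ ^ 2, -t₃, -t₃ ^ 2] with hM
  have hLI : LinearIndependent K M.row := by
    rw [Fintype.linearIndependent_iff]
    intro g hg
    have hc : ∀ j : Fin 6, g 0 * M 0 j + g 1 * M 1 j + g 2 * M 2 j + g 3 * M 3 j = 0 := by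
      intro j
      have h := congr_fun hg j
      simpa [Fin.sum_univ_four] using h
    have e0 := hc 0
    have e2 := hc 2
    have e3 := hc 3
    have e4 := hc 4
    have e5 := hc 5
    simp only [hM, Matrix.cons_val', Matrix.cons_val_zero, Matrix.cons_val_one,
      Matrix.head_cons, Matrix.cons_val_two, Matrix.cons_val_three, Matrix.cons_val_four,
      Matrix.head_fin_const, Matrix.empty_val', Matrix.cons_val_fin_one, Matrix.vecTail,
      Matrix.vecHead, Matrix.of_apply, Function.comp,
      show (5 : Fin 6) = (4 : Fin 5).succ from rfl, Matrix.cons_val_succ,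
      mul_one, mul_zero, add_zero, mul_neg] at e0 e2 e3 e4 e5
    -- split according to whether g3 vanishes or t₃ = t₂
    have hsplit : g 3 * t₃ * (t₃ - t₂) = 0 := by linear_combination t₂ * e4 - e5
    have finish0 : g 1 = 0 → g 2 = 0 → g 3 = 0 → ∀ i, g i = 0 := by
      intro hg1 hg2 hg3 i
      have hg0 : g 0 = 0 := by
        have := e0
        rw [hg1, hg2, hg3] at this
        simpa using this
      fin_cases i <;> assumption
    rcases mul_eq_zero.mp hsplit with h | h
    · -- g 3 = 0
      have hg3 : g 3 = 0 := by
        rcases mul_eq_zero.mp h with h' | h'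
        · exact h'
        · exact absurd h' ht30
      have hg2 : g 2 = 0 := by
        have h' : g 2 * t₂ = 0 := by linear_combination e4 + t₃ * hg3
        rcases mul_eq_zero.mp h' with h'' | h''
        · exact h''
        · exact absurd h'' ht20
      have hg1 : g 1 = 0 := by
        have h' : g 1 * (t₁ - 1) = 0 := by
          linear_combination e2 - e0 + (1 - ξ * t₂) * hg2 + (1 - ξ ^ 2 * t₃) * hg3
        rcases mul_eq_zero.mp h' with h'' | h''
        · exact h''
        · exact absurd h'' hu1
      exact finish0 hg1 hg2 hg3
    · -- t₃ = t₂
      have ht32 : t₃ = t₂ := sub_eq_zero.mp h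
      subst ht32
      have hg23 : g 2 = g 3 := by
        have h' : (g 2 - g 3) * t₃ = 0 := by linear_combination e4
        rcases mul_eq_zero.mp h' with h'' | h''
        · exact sub_eq_zero.mp h''
        · exact absurd h'' ht30
      rw [hg23] at e0 e2 e3
      -- combined relations
      have hA : g 1 * (t₁ - 1) = g 3 * (t₃ + 2) := by
        linear_combination e2 - e0 - g 3 * t₃ * hξ
      have hB : g 1 * t₁ * (t₁ - 1) = g 3 * t₃ * (t₃ - 1) := by
        linear_combination e3 - e2 - g 3 * (t₃ ^ 2 - t₃) * hξ
      have hC : g 3 * (t₁ * (t₃ + 2) - t₃ * (t₃ - 1)) = 0 := by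
        linear_combination hB - t₁ * hA
      have hg3 : g 3 = 0 := by
        rcases mul_eq_zero.mp hC with h' | h'
        · exact h'
        · exact absurd (sub_eq_zero.mp h') (fun hE => key t₃ h3 ht30 hE)
      have hg2 : g 2 = 0 := by rw [hg23, hg3]
      have hg1 : g 1 = 0 := by
        have h' : g 1 * (t₁ - 1) = 0 := by rw [hA, hg3, zero_mul]
        rcases mul_eq_zero.mp h' with h'' | h''
        · exact h''
        · exact absurd h'' hu1
      exact finish0 hg1 hg2 hg3
  have hrk := hLI.rank_matrix
  rw [hrk]
  simp
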